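/- The forest dimension of a digraph is at least the number of its weak components and at most the number of its strong components. -/

import Mathlib

open scoped Classical

/-- The arc relation of a finite arc set. -/
def arcRel {V : Type*} [DecidableEq V] (F : Finset (V × V)) : V → V → Prop :=
  fun a b => (a, b) ∈ F

/-- A diverging forest: no directed cycles, and every vertex has in-degree at most 1. -/
def IsDivForest {V : Type*} [DecidableEq V] (F : Finset (V × V)) : Prop :=
  (∀ v, ¬ Relation.TransGen (arcRel F) v v) ∧
  ∀ w z₁ z₂, (z₁, w) ∈ F → (z₂, w) ∈ F → z₁ = z₂

/-- The maximum number of arcs in a spanning diverging forest of `E`. -/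
noncomputable def maxArcs {V : Type*} [Fintype V] [DecidableEq V]
    (E : Finset (V × V)) : ℕ :=
  (Finset.univ.filter (fun F : Finset (V × V) => F ⊆ E ∧ IsDivForest F)).sup Finset.card

/-- The forest dimension of the digraph with arc set `E`. -/
noncomputable def forestDim {V : Type*} [Fintype V] [DecidableEq V]
    (E : Finset (V × V)) : ℕ :=
  Fintype.card V - maxArcs E

/-- Connectedness by a semipath (weak connectedness). -/
def weakReach {V : Type*} [DecidableEq V] (E : Finset (V × V)) : V → V → Prop :=
  Relation.ReflTransGen (fun a b => arcRel E a b ∨ arcRel E b a)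

/-- The set of weak components of `E`. -/
def weakComponents {V : Type*} [DecidableEq V] (E : Finset (V × V)) : Set (Set V) :=
  {C | ∃ v : V, C = {u | weakReach E v u}}

/-- The set of strong components of `E`. -/
def strongComponents {V : Type*} [DecidableEq V] (E : Finset (V × V)) : Set (Set V) :=
  {C | ∃ v : V, C = {u | Relation.ReflTransGen (arcRel E) v u ∧
    Relation.ReflTransGen (arcRel E) u v}}

/-! ### Auxiliary machinery -/

section Aux

variable {V : Type*} [DecidableEq V] (E : Finset (V × V))

/-- Reachability by a path of exactly `n` arcs. -/
def reachN : ℕ → V → V → Prop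
  | 0, a, b => a = b
  | n + 1, a, b => ∃ c, reachN n a c ∧ arcRel E c b

lemma rtg_iff_reachN {a b : V} :
    Relation.ReflTransGen (arcRel E) a b ↔ ∃ n, reachN E n a b := by
  constructor
  · intro h
    induction h with
    | refl => exact ⟨0, rfl⟩
    | tail _ hab ih => obtain ⟨n, hn⟩ := ih; exact ⟨n + 1, _, hn, hab⟩
  · rintro ⟨n, hn⟩
    induction n generalizing b with
    | zero => cases hn; exact .refl
    | succ n ih => obtain ⟨c, hc, hcb⟩ := hn; exact (ih hc).tail hcb

/-- The strong component of a vertex, as a set. -/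
def sclass (v : V) : Set V :=
  {u | Relation.ReflTransGen (arcRel E) v u ∧ Relation.ReflTransGen (arcRel E) u v}

lemma mem_sclass_self (v : V) : v ∈ sclass E v := ⟨.refl, .refl⟩

lemma sclass_eq_of_mem {u v : V} (h : u ∈ sclass E v) : sclass E u = sclass E v := by
  obtain ⟨h1, h2⟩ := h
  ext w
  exact ⟨fun ⟨a, b⟩ => ⟨h1.trans a, b.trans h2⟩, fun ⟨a, b⟩ => ⟨h2.trans a, b.trans h1⟩⟩

/-- A canonical representative of each strong component. -/
noncomputable def srep (v : V) : V :=
  (show ∃ u : V, sclass E v = sclass E u from ⟨v, rfl⟩).choose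

lemma sclass_srep (v : V) : sclass E (srep E v) = sclass E v :=
  (show ∃ u : V, sclass E v = sclass E u from ⟨v, rfl⟩).choose_spec.symm

lemma pick_congr {S T : Set V} (hS : ∃ u : V, S = sclass E u)
    (hT : ∃ u : V, T = sclass E u) (h : S = T) : hS.choose = hT.choose := by
  subst h; rfl

lemma srep_congr {u v : V} (h : sclass E u = sclass E v) : srep E u = srep E v :=
  pick_congr E _ _ h

lemma srep_mem (v : V) : srep E v ∈ sclass E v := by
  rw [← sclass_srep]; exact mem_sclass_self E _

lemma exists_reach_srep (v : V) : ∃ n, reachN E n (srep E v) v :=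
  (rtg_iff_reachN E).1 (srep_mem E v).2

/-- Distance from the component representative. -/
noncomputable def sdist (v : V) : ℕ := Nat.find (exists_reach_srep E v)

lemma exists_parent {v : V} (h : v ≠ srep E v) :
    ∃ c, (c, v) ∈ E ∧ srep E c = srep E v ∧ sdist E c < sdist E v := by
  have hspec : reachN E (sdist E v) (srep E v) v := Nat.find_spec (exists_reach_srep E v)
  have hn0 : sdist E v ≠ 0 := by
    intro h0
    rw [h0] at hspec
    exact h hspec.symm
  obtain ⟨m, hm⟩ := Nat.exists_eq_succ_of_ne_zero hn0
  rw [hm] at hspec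
  obtain ⟨c, hc, hcv⟩ := hspec
  have hrc : Relation.ReflTransGen (arcRel E) (srep E v) c := (rtg_iff_reachN E).2 ⟨m, hc⟩
  have hcr : Relation.ReflTransGen (arcRel E) c (srep E v) :=
    (Relation.ReflTransGen.single hcv).trans (srep_mem E v).1
  have hcm : c ∈ sclass E (srep E v) := ⟨hrc, hcr⟩
  have hcsc : sclass E c = sclass E v := by
    rw [sclass_eq_of_mem E hcm, sclass_srep]
  have hrep : srep E c = srep E v := srep_congr E hcsc
  refine ⟨c, hcv, hrep, ?_⟩
  have : sdist E c ≤ m := by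
    apply Nat.find_le
    rw [hrep]
    exact hc
  omega

/-- Parent function for the constructed forest. -/
noncomputable def spar (v : V) : V :=
  if h : v ≠ srep E v then (exists_parent E h).choose else v

lemma spar_spec {v : V} (h : v ≠ srep E v) :
    (spar E v, v) ∈ E ∧ srep E (spar E v) = srep E v ∧ sdist E (spar E v) < sdist E v := by
  rw [spar, dif_pos h]
  exact (exists_parent E h).choose_spec

end Aux

section AuxFin

variable {V : Type*} [Fintype V] [DecidableEq V] (E : Finset (V × V))

/-- The constructed spanning diverging forest, one root per strong component. -/
noncomputable def theF : Finset (V × V) :=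
  (Finset.univ.filter (fun v => v ≠ srep E v)).image (fun v => (spar E v, v))

lemma mem_theF {z w : V} : (z, w) ∈ theF E ↔ w ≠ srep E w ∧ z = spar E w := by
  simp only [theF, Finset.mem_image, Finset.mem_filter, Finset.mem_univ, true_and]
  constructor
  · rintro ⟨v, hv, heq⟩
    obtain ⟨h1, h2⟩ := Prod.mk.injEq .. ▸ heq
    cases heq
    exact ⟨hv, rfl⟩
  · rintro ⟨h1, rfl⟩
    exact ⟨w, h1, rfl⟩

lemma theF_subset : theF E ⊆ E := by
  intro e he
  obtain ⟨z, w⟩ := e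
  rw [mem_theF] at he
  obtain ⟨h1, rfl⟩ := he
  exact (spar_spec E h1).1

lemma theF_sdist {a b : V} (h : Relation.TransGen (arcRel (theF E)) a b) :
    sdist E a < sdist E b := by
  induction h with
  | single h =>
    rw [arcRel, mem_theF] at h
    obtain ⟨h1, rfl⟩ := h
    exact (spar_spec E h1).2.2
  | tail _ h ih =>
    rw [arcRel, mem_theF] at h
    obtain ⟨h1, rfl⟩ := h
    exact lt_trans ih (spar_spec E h1).2.2

lemma theF_forest : IsDivForest (theF E) := by
  constructor
  · intro v hv
    exact absurd (theF_sdist E hv) (lt_irrefl _)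
  · intro w z₁ z₂ h1 h2
    rw [mem_theF] at h1 h2
    rw [h1.2, h2.2]

lemma theF_card : (theF E).card = (Finset.univ.filter (fun v => v ≠ srep E v)).card := by
  rw [theF, Finset.card_image_of_injective]
  intro a b hab
  exact (Prod.mk.injEq .. ▸ hab).2

end AuxFin

section AuxWeak

variable {V : Type*} [DecidableEq V] (E : Finset (V × V))

/-- The weak component of a vertex. -/
def wclass (v : V) : Set V := {u | weakReach E v u}

lemma weakReach_symm {a b : V} (h : weakReach E a b) : weakReach E b a := by
  induction h with
  | refl => exact .refl
  | tail _ hbc ih => exact Relation.ReflTransGen.trans (.single hbc.symm) ih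

lemma wclass_eq_of_reach {u v : V} (h : weakReach E v u) : wclass E u = wclass E v := by
  ext w
  exact ⟨fun hw => h.trans hw, fun hw => (weakReach_symm E h).trans hw⟩

lemma exists_root [Finite V] {F : Finset (V × V)} (hFE : F ⊆ E)
    (hac : ∀ v, ¬ Relation.TransGen (arcRel F) v v) (v : V) :
    ∃ u, (∀ z, (z, u) ∉ F) ∧ weakReach E v u := by
  haveI : IsTrans V (Relation.TransGen (arcRel F)) := ⟨fun _ _ _ => Relation.TransGen.trans⟩
  haveI : IsIrrefl V (Relation.TransGen (arcRel F)) := ⟨hac⟩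
  have wf := Finite.wellFounded_of_trans_of_irrefl (Relation.TransGen (arcRel F))
  refine wf.induction
    (C := fun v => ∃ u, (∀ z, (z, u) ∉ F) ∧ weakReach E v u) v ?_
  intro x ih
  by_cases hx : ∀ z, (z, x) ∉ F
  · exact ⟨x, hx, .refl⟩
  · push_neg at hx
    obtain ⟨z, hz⟩ := hx
    obtain ⟨u, hu, hreach⟩ := ih z (Relation.TransGen.single hz)
    exact ⟨u, hu, Relation.ReflTransGen.trans (.single (Or.inr (hFE hz))) hreach⟩

end AuxWeak

section AuxCount

variable {V : Type*} [Fintype V] [DecidableEq V] (E : Finset (V × V))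

lemma weak_card_le_roots {F : Finset (V × V)} (hFE : F ⊆ E)
    (hac : ∀ v, ¬ Relation.TransGen (arcRel F) v v) :
    (weakComponents E).ncard ≤
      (Finset.univ.filter (fun w : V => ∀ z, (z, w) ∉ F)).card := by
  by_cases hne : Nonempty V
  · haveI := hne
    haveI : Inhabited V := Classical.inhabited_of_nonempty hne
    set roots := Finset.univ.filter (fun w : V => ∀ z, (z, w) ∉ F) with hroots
    set f : Set V → V := fun C =>
      if hC : ∃ v : V, C = wclass E v then (exists_root E hFE hac hC.choose).choose
      else default with hf
    have hfspec : ∀ C ∈ weakComponents E,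
        (∀ z, (z, f C) ∉ F) ∧ ∃ v : V, C = wclass E v ∧ weakReach E v (f C) := by
      intro C hC
      obtain ⟨v, hv⟩ := hC
      have hex : ∃ v : V, C = wclass E v := ⟨v, hv⟩
      rw [hf]
      simp only [dif_pos hex]
      obtain ⟨h1, h2⟩ := (exists_root E hFE hac hex.choose).choose_spec
      exact ⟨h1, hex.choose, hex.choose_spec, h2⟩
    have hinj : Set.InjOn f (weakComponents E) := by
      intro C₁ h₁ C₂ h₂ heq
      obtain ⟨-, v₁, hv₁, hr₁⟩ := hfspec C₁ h₁
      obtain ⟨-, v₂, hv₂, hr₂⟩ := hfspec C₂ h₂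
      rw [hv₁, hv₂]
      rw [heq] at hr₁
      rw [← wclass_eq_of_reach E hr₁, ← wclass_eq_of_reach E hr₂]
    have himg : f '' weakComponents E ⊆ ↑roots := by
      rintro _ ⟨C, hC, rfl⟩
      simp only [hroots, Finset.coe_filter, Finset.mem_univ, true_and, Set.mem_setOf_eq]
      exact (hfspec C hC).1
    calc (weakComponents E).ncard = (f '' weakComponents E).ncard :=
          (Set.ncard_image_of_injOn hinj).symm
      _ ≤ (↑roots : Set V).ncard := Set.ncard_le_ncard himg (Finset.finite_toSet _)
      _ = roots.card := Set.ncard_coe_finset _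
  · have : weakComponents E = ∅ := by
      ext C
      simp only [Set.mem_empty_iff_false, iff_false]
      rintro ⟨v, -⟩
      exact hne ⟨v⟩
    simp [this]

lemma key_weak {F : Finset (V × V)} (hF : F ⊆ E ∧ IsDivForest F) :
    F.card + (weakComponents E).ncard ≤ Fintype.card V := by
  have h1 : F.card ≤ (Finset.univ.filter (fun w : V => ¬ ∀ z, (z, w) ∉ F)).card := by
    apply Finset.card_le_card_of_injOn (fun e => e.2)
    · intro e he
      simp only [Finset.mem_coe, Finset.mem_filter, Finset.mem_univ, true_and, not_forall, not_not]
      exact ⟨e.1, he⟩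
    · intro a ha b hb hab
      simp only [Finset.mem_coe] at ha hb
      have hab' : a.2 = b.2 := hab
      have h2 := hF.2.2 a.2 a.1 b.1 ha (by rw [hab']; exact hb)
      exact Prod.ext h2 hab' 
  have h2 := Finset.card_filter_add_card_filter_not
    (s := (Finset.univ : Finset V)) (p := fun w : V => ∀ z, (z, w) ∉ F)
  rw [Finset.card_univ] at h2
  have h3 := weak_card_le_roots E hF.1 hF.2.1
  omega

lemma fix_card_le :
    (Finset.univ.filter (fun v : V => v = srep E v)).card ≤ (strongComponents E).ncard := by
  set Fix := Finset.univ.filter (fun v : V => v = srep E v) with hFix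
  have hinj : Set.InjOn (sclass E) ↑Fix := by
    intro a ha b hb hab
    simp only [hFix, Finset.coe_filter, Finset.mem_univ, true_and, Set.mem_setOf_eq] at ha hb
    rw [ha, hb, srep_congr E hab]
  have himg : sclass E '' ↑Fix ⊆ strongComponents E := by
    rintro _ ⟨v, -, rfl⟩
    exact ⟨v, rfl⟩
  calc Fix.card = (↑Fix : Set V).ncard := (Set.ncard_coe_finset _).symm
    _ = (sclass E '' ↑Fix).ncard := (Set.ncard_image_of_injOn hinj).symm
    _ ≤ (strongComponents E).ncard := Set.ncard_le_ncard himg (Set.toFinite _)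

end AuxCount

/-! ### Main theorem -/

/-- The forest dimension lies between the number of weak components and the number of
strong components. -/
theorem stmt10 {V : Type*} [Fintype V] [DecidableEq V] (E : Finset (V × V)) :
    (weakComponents E).ncard ≤ forestDim E ∧
      forestDim E ≤ (strongComponents E).ncard := by
  classical
  constructor
  · have hkey : ∀ F ∈ Finset.univ.filter
        (fun F : Finset (V × V) => F ⊆ E ∧ IsDivForest F),
        F.card + (weakComponents E).ncard ≤ Fintype.card V := by
      intro F hF
      rw [Finset.mem_filter] at hF
      exact key_weak E hF.2
    have h1 : maxArcs E ≤ Fintype.card V - (weakComponents E).ncard :=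
      Finset.sup_le fun F hF => Nat.le_sub_of_add_le (hkey F hF)
    have h2 : (weakComponents E).ncard ≤ Fintype.card V := by
      have hmem : (∅ : Finset (V × V)) ∈ Finset.univ.filter
          (fun F : Finset (V × V) => F ⊆ E ∧ IsDivForest F) := by
        simp only [Finset.mem_filter, Finset.mem_univ, true_and]
        refine ⟨Finset.empty_subset _, ?_, ?_⟩
        · intro v hv
          cases hv with
          | single h => exact absurd h (Finset.notMem_empty _)
          | tail _ h => exact absurd h (Finset.notMem_empty _)
        · intro w z₁ z₂ h1 _
          exact absurd h1 (Finset.notMem_empty _)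
      simpa using hkey ∅ hmem
    unfold forestDim
    omega
  · have h1 : (theF E).card ≤ maxArcs E := by
      apply Finset.le_sup
      simp only [Finset.mem_filter, Finset.mem_univ, true_and]
      exact ⟨theF_subset E, theF_forest E⟩
    have h2 := Finset.card_filter_add_card_filter_not
      (s := (Finset.univ : Finset V)) (p := fun v : V => v = srep E v)
    rw [Finset.card_univ] at h2
    have h3 : (Finset.univ.filter (fun v : V => ¬ v = srep E v)).card = (theF E).card := by
      rw [theF_card]
    have h4 := fix_card_le E
    unfold forestDim
    omega
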